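/- Let X be a finite set, let y be a real-valued function on the subsets of X, and let r ≥ 0 be an integer. If the level-r moment matrix M_r(y) is positive semidefinite, y_∅ = 1, and I ⊆ X is a set with |I| ≤ r and y_I = 1, then y_{I∪J} = y_J for every J ⊆ X with |J| ≤ r. -/

import Mathlib

open Matrix

/-- For a finite set `X`, `y : Finset X → ℝ` and `r ≥ 0`, if the level-`r`
moment matrix `M_r(y) = (y_{I ∪ J})_{|I|,|J| ≤ r}` is positive semidefinite, `y ∅ = 1`,
`|I| ≤ r` and `y I = 1`, then `y (I ∪ J) = y J` for every `J` with `|J| ≤ r`. -/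
theorem moment_matrix_entry_one {X : Type*} [Fintype X] [DecidableEq X]
    (y : Finset X → ℝ) (r : ℕ)
    (hM : (Matrix.of fun I J : {S : Finset X // S.card ≤ r} => y (I.1 ∪ J.1)).PosSemidef)
    (hempty : y ∅ = 1)
    (I : Finset X) (hI : I.card ≤ r) (hyI : y I = 1) :
    ∀ J : Finset X, J.card ≤ r → y (I ∪ J) = y J := by
  intro J hJ
  set M := (Matrix.of fun I J : {S : Finset X // S.card ≤ r} => y (I.1 ∪ J.1))
  set e0 : {S : Finset X // S.card ≤ r} := ⟨∅, by simp⟩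
  set eI : {S : Finset X // S.card ≤ r} := ⟨I, hI⟩
  classical
  set x : {S : Finset X // S.card ≤ r} → ℝ :=
    fun S => (if S = e0 then (1:ℝ) else 0) - (if S = eI then 1 else 0)
  have hmv : ∀ K : {S : Finset X // S.card ≤ r},
      (M *ᵥ x) K = y K.1 - y (K.1 ∪ I) := by
    intro K
    simp only [Matrix.mulVec, dotProduct, x, mul_sub, mul_ite, mul_one, mul_zero]
    rw [Finset.sum_sub_distrib, Finset.sum_ite_eq' _ e0, Finset.sum_ite_eq' _ eI]
    simp [M, e0, eI]
  have hq : x ⬝ᵥ M *ᵥ x = 0 := by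
    simp only [dotProduct, x, sub_mul, ite_mul, one_mul, zero_mul]
    rw [Finset.sum_sub_distrib, Finset.sum_ite_eq' _ e0, Finset.sum_ite_eq' _ eI]
    have h0 := hmv e0
    have h1 := hmv eI
    simp only [x] at h0 h1
    rw [h0, h1]
    simp [hempty, hyI, e0, eI]
  have hker : M *ᵥ x = 0 := by
    have := (hM.dotProduct_mulVec_zero_iff x).mp (by simpa using hq)
    exact this
  have := hmv ⟨J, hJ⟩
  rw [hker] at this
  simp only [Pi.zero_apply] at this
  have : y (J ∪ I) = y J := by linarith
  rwa [Finset.union_comm]
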